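/- For every natural number n ≥ 0, the group Q₈ × C₂ⁿ is a Cayley integral group, where Q₈ is the quaternion group of order 8 and C₂ⁿ is the direct product of n copies of the cyclic group of order 2. -/

import Mathlib

open scoped Classical

/-- The adjacency matrix of the undirected Cayley graph `Cay(G,S)`:
the `(a,b)` entry is `1` if `a * b⁻¹ ∈ S` and `0` otherwise. -/
noncomputable def cayleyAdjMatrix {G : Type*} [Group G] [Fintype G] (S : Set G) :
    Matrix G G ℝ :=
  Matrix.of fun a b => if a * b⁻¹ ∈ S then (1 : ℝ) else 0

/-- A finite group `G` is *Cayley integral* if for every subset `S ⊆ G` with `1 ∉ S` and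
`S = S⁻¹`, every eigenvalue of the adjacency matrix of the Cayley graph `Cay(G,S)`
is an integer. -/
def IsCayleyIntegral (G : Type*) [Group G] [Fintype G] : Prop :=
  ∀ S : Set G, (1 : G) ∉ S → (∀ s ∈ S, s⁻¹ ∈ S) →
    ∀ μ ∈ spectrum ℝ (cayleyAdjMatrix S), ∃ k : ℤ, μ = (k : ℝ)

set_option linter.unusedSectionVars false


private lemma sum_map_add' {V : Type*} [AddCommMonoid V] {α : Type*} (l : List α) (f g : α → V) :
    (l.map fun a => f a + g a).sum = (l.map f).sum + (l.map g).sum := by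
  induction l with
  | nil => simp
  | cons a l ih => simp [ih]; abel

private lemma sum_map_neg' {V : Type*} [AddCommGroup V] {α : Type*} (l : List α) (f : α → V) :
    (l.map fun a => -(f a)).sum = -((l.map f).sum) := by
  induction l with
  | nil => simp
  | cons a l ih => simp only [List.map_cons, List.sum_cons, ih]; abel

private lemma key_lemma {V : Type*} [AddCommGroup V] [Module ℝ V] (l : List (V →ₗ[ℝ] V)) :
    ∀ (e : V →ₗ[ℝ] V) (μ : ℝ) (v : V), v ≠ 0 → e v = v →
    (∀ U ∈ l, ∀ x : V, e x = x → e (U x) = U x) →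
    (∀ U ∈ l, ∀ x : V, e x = x → U (U x) = x) →
    (∀ U ∈ l, ∀ W ∈ l, ∀ x : V, e x = x → U (W x) = W (U x)) →
    (l.map fun U => U v).sum = μ • v → ∃ k : ℤ, μ = (k : ℝ) := by
  induction l with
  | nil =>
    intro e μ v hv _ _ _ _ hsum
    refine ⟨0, ?_⟩
    simp only [List.map_nil, List.sum_nil] at hsum
    rcases smul_eq_zero.mp hsum.symm with h | h
    · simpa using h
    · exact absurd h hv
  | cons U l ih =>
    intro e μ v hv hev hfix hinv hcomm hsum
    have hUmem : U ∈ U :: l := List.mem_cons_self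
    have hmem : ∀ W ∈ l, W ∈ U :: l := fun W hW => List.mem_cons_of_mem U hW
    set u := U v with hu
    have heu : e u = u := hfix U hUmem v hev
    have hUu : U u = v := hinv U hUmem v hev
    have hsum' : (l.map fun W => W v).sum = μ • v - u := by
      simp only [List.map_cons, List.sum_cons] at hsum
      rw [← hsum]; abel
    have hWu : (l.map fun W => W u).sum = μ • u - v := by
      have h1 : (l.map fun W => W u) = (l.map fun W => U (W v)) :=
        List.map_congr_left fun W hW => hcomm W (hmem W hW) U hUmem v hev
      have h2 : (l.map fun W => U (W v)).sum = U ((l.map fun W => W v).sum) := by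
        rw [map_list_sum U, List.map_map]; rfl
      rw [h1, h2, hsum', map_sub, map_smul, hUu, ← hu]
    have hkey : v + u ≠ 0 ∨ v - u ≠ 0 := by
      by_contra h
      push_neg at h
      apply hv
      have : (2 : ℝ) • v = 0 := by
        have := congrArg₂ (· + ·) h.1 h.2
        simpa [two_smul] using this
      simpa using (smul_eq_zero.mp this).resolve_left (by norm_num)
    have hfix' := fun W hW => hfix W (hmem W hW)
    have hinv' := fun W hW => hinv W (hmem W hW)
    have hcomm' := fun W hW W' hW' => hcomm W (hmem W hW) W' (hmem W' hW')
    rcases hkey with hw | hw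
    · -- w = v + u, eigenvalue μ - 1
      have hew : e (v + u) = v + u := by rw [map_add, hev, heu]
      have hsw : (l.map fun W => W (v + u)).sum = (μ - 1) • (v + u) := by
        have : (l.map fun W => W (v + u)) = l.map fun W => W v + W u :=
          List.map_congr_left fun W _ => map_add W v u
        rw [this, sum_map_add', hsum', hWu, sub_smul, one_smul, smul_add]
        abel
      obtain ⟨k, hk⟩ := ih e (μ - 1) (v + u) hw hew hfix' hinv' hcomm' hsw
      exact ⟨k + 1, by push_cast; linarith⟩
    · -- w = v - u, eigenvalue μ + 1
      have hew : e (v - u) = v - u := by rw [map_sub, hev, heu]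
      have hsw : (l.map fun W => W (v - u)).sum = (μ + 1) • (v - u) := by
        have h1 : (l.map fun W => W (v - u)) = l.map fun W => W v + (-(W u)) :=
          List.map_congr_left fun W _ => by rw [map_sub]; abel
        have h2 : (l.map fun W => -(W u)).sum = -((l.map fun W => W u).sum) :=
          sum_map_neg' l (fun W => W u)
        rw [h1, sum_map_add' l (fun W => W v) (fun W => -(W u)), hsum', h2, hWu, add_smul, one_smul, smul_sub]
        abel
      obtain ⟨k, hk⟩ := ih e (μ + 1) (v - u) hw hew hfix' hinv' hcomm' hsw
      exact ⟨k - 1, by push_cast; linarith⟩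

section Matrices

variable {G : Type*} [Group G] [Fintype G] [DecidableEq G]

noncomputable def permMat (g : G) : Matrix G G ℝ :=
  Matrix.of fun a b => if a = g * b then 1 else 0

lemma permMat_mul (g h : G) : permMat g * permMat h = permMat (g * h) := by
  ext a b
  simp only [permMat, Matrix.mul_apply, Matrix.of_apply, ite_mul, one_mul, zero_mul]
  rw [Finset.sum_eq_single (g⁻¹ * a)]
  · by_cases h1 : a = g * h * b
    · simp [mul_assoc, h1]
    · have h2 : ¬ (g⁻¹ * a = h * b) := by
        intro h3; exact h1 (by rw [mul_assoc, ← h3, mul_inv_cancel_left])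
      have h3 : a = g * (g⁻¹ * a) := by group
      simp [h2, h1, ← h3]
  · intro c _ hc
    have : ¬ (a = g * c) := fun h4 => hc (by rw [h4, inv_mul_cancel_left])
    simp [this]
  · intro h4; exact absurd (Finset.mem_univ _) h4

lemma permMat_one : permMat (1 : G) = 1 := by
  ext a b
  simp [permMat, Matrix.one_apply]

lemma adj_eq_sum (S : Set G) : cayleyAdjMatrix S = ∑ s ∈ S.toFinset, permMat s := by
  ext a b
  simp only [cayleyAdjMatrix, Matrix.sum_apply, permMat, Matrix.of_apply]
  have h1 : ∀ s : G, (if a = s * b then (1:ℝ) else 0) = (if s = a * b⁻¹ then (1:ℝ) else 0) := by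
    intro s
    congr 1
    rw [eq_iff_iff]
    constructor
    · intro h; rw [h]; group
    · intro h; rw [h]; group
  rw [Finset.sum_congr rfl fun s _ => h1 s, Finset.sum_ite_eq' S.toFinset (a * b⁻¹) fun _ => (1:ℝ)]
  simp [Set.mem_toFinset]

end Matrices

private lemma cayley_integral_of (G : Type*) [Group G] [Fintype G] (ε : G)
    (hcen : ∀ g : G, ε * g = g * ε)
    (heps : ε * ε = 1) (hne : ε ≠ 1)
    (hsq : ∀ g : G, g * g = 1 ∨ g * g = ε)
    (hic : ∀ g h : G, g * g = 1 → g * h = h * g)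
    (hcm : ∀ g h : G, g * h = h * g ∨ g * h = ε * (h * g)) :
    IsCayleyIntegral G := by
  classical
  intro S hS1 hSinv μ hμ
  let U : G → ((G → ℝ) →ₗ[ℝ] (G → ℝ)) := fun g => Matrix.toLin' (permMat g)
  have hUmul : ∀ g h : G, ∀ x, U g (U h x) = U (g * h) x := by
    intro g h x
    show Matrix.toLin' (permMat g) (Matrix.toLin' (permMat h) x) = Matrix.toLin' (permMat (g*h)) x
    rw [← permMat_mul g h, Matrix.toLin'_mul]
    rfl
  have hU1 : ∀ x, U (1 : G) x = x := by
    intro x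
    show Matrix.toLin' (permMat (1:G)) x = x
    rw [permMat_one, Matrix.toLin'_one]
    rfl
  have hee : ∀ x, U ε (U ε x) = x := by intro x; rw [hUmul, heps, hU1]
  have heU : ∀ g : G, ∀ x, U ε (U g x) = U g (U ε x) := by
    intro g x; rw [hUmul, hUmul, hcen g]
  -- eigenvector
  have hμ' : μ ∈ spectrum ℝ (Matrix.toLin' (cayleyAdjMatrix S)) := by
    rw [show (Matrix.toLin' (cayleyAdjMatrix S) : (G → ℝ) →ₗ[ℝ] (G → ℝ))
        = Matrix.toLinAlgEquiv' (cayleyAdjMatrix S) from rfl,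
      AlgEquiv.spectrum_eq Matrix.toLinAlgEquiv' (cayleyAdjMatrix S)]
    exact hμ
  have h1 : Module.End.HasEigenvalue (Matrix.toLin' (cayleyAdjMatrix S) : Module.End ℝ (G → ℝ)) μ :=
    Module.End.hasEigenvalue_iff_mem_spectrum.mpr hμ'
  obtain ⟨v, hv⟩ := h1.exists_hasEigenvector
  have hv0 : v ≠ 0 := hv.right
  have hvA : Matrix.toLin' (cayleyAdjMatrix S) v = μ • v := hv.apply_eq_smul
  have hAact : ∀ x, Matrix.toLin' (cayleyAdjMatrix S) x = ∑ s ∈ S.toFinset, U s x := by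
    intro x
    rw [adj_eq_sum S, map_sum Matrix.toLin' permMat S.toFinset]
    simp [U, LinearMap.sum_apply]
  -- A commutes with e := U ε
  have hAe : ∀ x, Matrix.toLin' (cayleyAdjMatrix S) (U ε x) = U ε (Matrix.toLin' (cayleyAdjMatrix S) x) := by
    intro x
    rw [hAact, hAact, map_sum (U ε)]
    exact Finset.sum_congr rfl fun s _ => (heU s x).symm
  -- list sum over a finset
  have hlist : ∀ (F : Finset G) (x : G → ℝ),
      ((F.toList.map U).map fun W => W x).sum = ∑ s ∈ F, U s x := by
    intro F x
    rw [List.map_map]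
    exact Finset.sum_map_toList F fun s => U s x
  have hmemlist : ∀ (F : Finset G) (W : (G → ℝ) →ₗ[ℝ] (G → ℝ)),
      W ∈ F.toList.map U → ∃ s ∈ F, W = U s := by
    intro F W hW
    obtain ⟨s, hs, rfl⟩ := List.mem_map.mp hW
    exact ⟨s, Finset.mem_toList.mp hs, rfl⟩
  by_cases hp : v + U ε v = 0
  · -- minus sector : w = v - U ε v = 2 • v
    have hεv : U ε v = -v := eq_neg_of_add_eq_zero_right hp
    set w := v - U ε v with hw
    have hw0 : w ≠ 0 := by
      rw [hw, hεv, sub_neg_eq_add, ← two_smul ℝ v]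
      intro h
      exact hv0 (by simpa using (smul_eq_zero.mp h).resolve_left (by norm_num))
    have hew : U ε w = -w := by
      rw [hw, map_sub, hee, hεv]
      abel
    have hAw : ∑ s ∈ S.toFinset, U s w = μ • w := by
      rw [← hAact, hw, map_sub, hvA, hAe, hvA, map_smul, smul_sub]
    -- split off the order-4 part
    have hsplit := Finset.sum_filter_add_sum_filter_not S.toFinset
      (fun s => s * s = 1) (fun s => U s w)
    have hzero : ∑ s ∈ S.toFinset.filter (fun s => ¬ s * s = 1), U s w = 0 := by
      refine Finset.sum_involution (fun a _ => ε * a) ?_ ?_ ?_ ?_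
      · intro a ha
        show U a w + U (ε * a) w = 0
        have h1 : U (ε * a) w = - (U a w) := by
          rw [← hUmul, heU, hew, map_neg]
        rw [h1]; abel
      · intro a _ _ h
        exact hne (mul_right_cancel (h.trans (one_mul a).symm))
      · intro a ha
        rw [Finset.mem_filter] at ha ⊢
        obtain ⟨haS, ha2⟩ := ha
        have haa : a * a = ε := (hsq a).resolve_left ha2
        have hinva : ε * a = a⁻¹ := by
          have h2 : (ε * a) * a = 1 := by rw [mul_assoc, haa, heps]
          exact mul_eq_one_iff_eq_inv.mp h2
        constructor
        · show ε * a ∈ S.toFinset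
          rw [Set.mem_toFinset] at haS ⊢
          rw [hinva]
          exact hSinv a haS
        · show ¬ (ε * a) * (ε * a) = 1
          intro hcontra
          apply ha2
          have hkey : (ε * a) * (ε * a) = ε * ε * (a * a) := by
            calc (ε * a) * (ε * a) = ε * (a * ε * a) := by rw [mul_assoc, mul_assoc]
            _ = ε * (ε * a * a) := by rw [← hcen a]
            _ = ε * ε * (a * a) := by rw [mul_assoc, ← mul_assoc, ← mul_assoc]
          rw [hkey, heps, one_mul] at hcontra
          exact hcontra
      · intro a ha
        show ε * (ε * a) = a
        rw [← mul_assoc, heps, one_mul]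
    have hAw2 : ∑ s ∈ S.toFinset.filter (fun s => s * s = 1), U s w = μ • w := by
      rw [← hAw, ← hsplit, hzero, add_zero]
    refine key_lemma ((S.toFinset.filter (fun s => s * s = 1)).toList.map U)
      LinearMap.id μ w hw0 rfl ?_ ?_ ?_ ?_
    · intro W _ x _; rfl
    · intro W hW x _
      obtain ⟨s, hs, rfl⟩ := hmemlist _ W hW
      have hs2 : s * s = 1 := (Finset.mem_filter.mp hs).2
      rw [hUmul, hs2, hU1]
    · intro W hW W' hW' x _
      obtain ⟨s, hs, rfl⟩ := hmemlist _ W hW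
      obtain ⟨t, ht, rfl⟩ := hmemlist _ W' hW'
      have hs2 : s * s = 1 := (Finset.mem_filter.mp hs).2
      rw [hUmul, hUmul, hic s t hs2]
    · rw [hlist]
      exact hAw2
  · -- plus sector : w = v + U ε v
    set w := v + U ε v with hw
    have hew : U ε w = w := by
      rw [hw, map_add, hee]
      abel
    have hAw : ∑ s ∈ S.toFinset, U s w = μ • w := by
      rw [← hAact, hw, map_add, hvA, hAe, hvA, map_smul, smul_add]
    refine key_lemma (S.toFinset.toList.map U) (U ε) μ w hp hew ?_ ?_ ?_ ?_
    · intro W hW x hx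
      obtain ⟨s, _, rfl⟩ := hmemlist _ W hW
      rw [heU, hx]
    · intro W hW x hx
      obtain ⟨s, _, rfl⟩ := hmemlist _ W hW
      rw [hUmul]
      rcases hsq s with h | h
      · rw [h, hU1]
      · rw [h, hx]
    · intro W hW W' hW' x hx
      obtain ⟨s, _, rfl⟩ := hmemlist _ W hW
      obtain ⟨t, _, rfl⟩ := hmemlist _ W' hW'
      rw [hUmul, hUmul]
      rcases hcm s t with h | h
      · rw [h]
      · rw [h, ← hUmul, ← hUmul, heU, heU, hx]
    · rw [hlist]
      exact hAw


/-- For every `n ≥ 0`, the group `Q₈ × C₂ⁿ` is Cayley integral. -/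
theorem q8_times_c2n_cayley_integral (n : ℕ) :
    IsCayleyIntegral (QuaternionGroup 2 × (Fin n → Multiplicative (ZMod 2))) := by
  have hq1 : ∀ x : QuaternionGroup 2, x * x = 1 ∨ x * x = QuaternionGroup.a 2 := by decide
  have hq2 : ∀ x : QuaternionGroup 2, QuaternionGroup.a 2 * x = x * QuaternionGroup.a 2 := by
    decide
  have hq3 : ∀ x y : QuaternionGroup 2, x * x = 1 → x * y = y * x := by decide
  have hq4 : ∀ x y : QuaternionGroup 2,
      x * y = y * x ∨ x * y = QuaternionGroup.a 2 * (y * x) := by decide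
  have hq5 : (QuaternionGroup.a 2 : QuaternionGroup 2) ≠ 1 := by decide
  have hq6 : (QuaternionGroup.a 2 : QuaternionGroup 2) * QuaternionGroup.a 2 = 1 := by decide
  have hc2 : ∀ c : Fin n → Multiplicative (ZMod 2), c * c = 1 := by
    intro c
    funext i
    exact (by decide : ∀ y : Multiplicative (ZMod 2), y * y = 1) (c i)
  refine cayley_integral_of _ (QuaternionGroup.a 2, 1) ?_ ?_ ?_ ?_ ?_ ?_
  · intro g
    exact Prod.ext (hq2 g.1) (by simp)
  · exact Prod.ext hq6 (by simp)
  · intro h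
    exact hq5 (congrArg Prod.fst h)
  · intro g
    rcases hq1 g.1 with h | h
    · exact Or.inl (Prod.ext h (hc2 g.2))
    · exact Or.inr (Prod.ext h (hc2 g.2))
  · intro g h hg
    exact Prod.ext (hq3 g.1 h.1 (congrArg Prod.fst hg)) (mul_comm g.2 h.2)
  · intro g h
    rcases hq4 g.1 h.1 with hx | hx
    · exact Or.inl (Prod.ext hx (mul_comm g.2 h.2))
    · refine Or.inr (Prod.ext hx ?_)
      show g.2 * h.2 = 1 * (h.2 * g.2)
      rw [one_mul, mul_comm]
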